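/- arXiv:2308.01228 — 2 statements merged into one kernel-verified Lean document; each statement's English description precedes it below -/
import Mathlib

section
/- Let ρ ∈ (0, 1/2). Suppose Z : (0, ∞) → ℝ is measurable, nonnegative, and square-integrable on (0, ∞), and there exist constants C > 0 and t* ≥ 0 such that ∫_t^∞ Z(τ)² dτ ≤ C · Z(t)^{1/(1-ρ)} for almost all t ≥ t*. Then Z is integrable on (0, ∞). -/
open MeasureTheory Set

set_option maxHeartbeats 2000000 in
theorem stmt_0 (ρ : ℝ) (hρ : ρ ∈ Set.Ioo (0:ℝ) (1/2)) (Z : ℝ → ℝ)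
    (hmeas : Measurable Z) (hnn : ∀ t ∈ Set.Ioi (0:ℝ), 0 ≤ Z t)
    (hL2 : MeasureTheory.IntegrableOn (fun t => Z t ^ 2) (Set.Ioi 0))
    (C tstar : ℝ) (hC : 0 < C) (htstar : 0 ≤ tstar)
    (hineq : ∀ᵐ t : ℝ, tstar ≤ t →
      (∫ τ in Set.Ioi t, Z τ ^ 2) ≤ C * Z t ^ ((1:ℝ) / (1 - ρ))) :
    MeasureTheory.IntegrableOn Z (Set.Ioi 0) := by
  obtain ⟨hρ0, hρ2⟩ := hρ
  have h1ρ : (0:ℝ) < 1 - ρ := by linarith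
  set H : ℝ → ℝ := fun t => ∫ τ in Ioi t, Z τ ^ 2 with hHdef
  have hHnn : ∀ t, 0 ≤ H t := fun t =>
    setIntegral_nonneg measurableSet_Ioi fun τ _ => sq_nonneg _
  have hZ2int : ∀ t : ℝ, 0 ≤ t → IntegrableOn (fun τ => Z τ ^ 2) (Ioi t) :=
    fun t ht => hL2.mono_set (Ioi_subset_Ioi ht)
  have hHanti : ∀ t s : ℝ, 0 ≤ t → t ≤ s → H s ≤ H t := by
    intro t s ht hts
    exact setIntegral_mono_set (hZ2int t ht) (ae_of_all _ fun τ => sq_nonneg _)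
      (HasSubset.Subset.eventuallyLE (Ioi_subset_Ioi hts))
  set β : ℝ := 2 * (1 - ρ) with hβdef
  have hβ1 : 1 < β := by rw [hβdef]; linarith
  have hβ0 : 0 < β := by linarith
  set α : ℝ := 1 / (β - 1) with hαdef
  have hα1 : 1 < α := by
    rw [hαdef, lt_div_iff₀ (by linarith : (0:ℝ) < β - 1)]
    rw [hβdef]; linarith
  have hα0 : 0 < α := by linarith
  have hαβ : α * β = α + 1 := by
    have h : α * (β - 1) = 1 := by
      rw [hαdef]; field_simp [show β - 1 ≠ 0 from ne_of_gt (by linarith)]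
    nlinarith [h]
  -- key pointwise inequality
  have hkey : ∀ᵐ τ : ℝ, tstar < τ → (H τ / C) ^ β ≤ Z τ ^ 2 := by
    filter_upwards [hineq] with τ hτ hlt
    have hτ0 : 0 < τ := lt_of_le_of_lt htstar hlt
    have hZnn : 0 ≤ Z τ := hnn τ hτ0
    have h1 : H τ / C ≤ Z τ ^ ((1:ℝ)/(1-ρ)) := by
      rw [div_le_iff₀ hC]
      have := hτ hlt.le
      linarith [this]
    calc (H τ / C) ^ β ≤ (Z τ ^ ((1:ℝ)/(1-ρ))) ^ β :=
          Real.rpow_le_rpow (div_nonneg (hHnn τ) hC.le) h1 hβ0.le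
      _ = Z τ ^ ((1:ℝ)/(1-ρ) * β) := by rw [← Real.rpow_mul hZnn]
      _ = Z τ ^ (2:ℝ) := by
          congr 1
          rw [hβdef]; field_simp
      _ = Z τ ^ 2 := Real.rpow_two _
  -- key integral inequality
  have hkey2 : ∀ t s : ℝ, tstar ≤ t → t ≤ s → (s - t) * (H s / C) ^ β ≤ H t := by
    intro t s ht hts
    have ht0 : 0 ≤ t := le_trans htstar ht
    have hsub : Ioc t s ⊆ Ioi (0:ℝ) := fun x hx => lt_of_le_of_lt ht0 hx.1
    have hint2 : IntegrableOn (fun τ => Z τ ^ 2) (Ioc t s) := hL2.mono_set hsub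
    have step1 : ∫ _τ in Ioc t s, (H s / C) ^ β ≤ ∫ τ in Ioc t s, Z τ ^ 2 := by
      refine setIntegral_mono_ae_restrict ((integrableOn_const_iff enorm_ne_top).mpr (Or.inr ?_)) hint2 ?_
      · rw [Real.volume_Ioc]; exact ENNReal.ofReal_lt_top
      · filter_upwards [ae_restrict_mem measurableSet_Ioc, ae_restrict_of_ae hkey]
          with τ hmem hk
        have hτt : tstar < τ := lt_of_le_of_lt ht hmem.1
        calc (H s / C) ^ β ≤ (H τ / C) ^ β := by
              gcongr
              exact hHanti τ s (le_trans ht0 hmem.1.le) hmem.2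
          _ ≤ Z τ ^ 2 := hk hτt
    have hvol : ∫ _τ in Ioc t s, (H s / C) ^ β = (s - t) * (H s / C) ^ β := by
      rw [setIntegral_const, measureReal_def, Real.volume_Ioc, ENNReal.toReal_ofReal (by linarith), smul_eq_mul]
    have step2 : ∫ τ in Ioc t s, Z τ ^ 2 ≤ H t :=
      setIntegral_mono_set (hZ2int t ht0) (ae_of_all _ fun τ => sq_nonneg _)
        (HasSubset.Subset.eventuallyLE Ioc_subset_Ioi_self)
    rw [hvol] at step1
    linarith
  -- the constant M for the dyadic decay
  set M : ℝ := max (H (tstar + 1)) ((C * (2:ℝ) ^ α) ^ (β / (β - 1))) with hMdef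
  have hM0 : 0 < M := lt_max_of_lt_right (Real.rpow_pos_of_pos (by positivity) _)
  have hβ1' : β - 1 ≠ 0 := by linarith
  have hMC : C * (2:ℝ) ^ α ≤ M ^ ((β - 1) / β) := by
    have h1 : (C * (2:ℝ) ^ α) ^ (β / (β - 1)) ≤ M := le_max_right _ _
    have h2 := Real.rpow_le_rpow (Real.rpow_nonneg (by positivity) _) h1
      (show (0:ℝ) ≤ (β - 1) / β from div_nonneg (by linarith) hβ0.le)
    rwa [← Real.rpow_mul (by positivity : (0:ℝ) ≤ C * (2:ℝ) ^ α),
      show β / (β - 1) * ((β - 1) / β) = 1 from by field_simp,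
      Real.rpow_one] at h2
  have hind : ∀ k : ℕ, H (tstar + 2 ^ k) ≤ M * (2:ℝ) ^ (-(α * k)) := by
    intro k
    induction k with
    | zero =>
      simp only [pow_zero, Nat.cast_zero, mul_zero, neg_zero, Real.rpow_zero, mul_one]
      exact le_max_left _ _
    | succ k ih =>
      have h2k : (0:ℝ) < 2 ^ k := by positivity
      have hts : tstar + 2 ^ k ≤ tstar + (2:ℝ) ^ (k+1) := by
        have h : (2:ℝ) ^ k ≤ 2 ^ (k+1) := by
          apply pow_le_pow_right₀ (by norm_num) (Nat.le_succ k)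
        linarith
      have hCk := hkey2 (tstar + 2 ^ k) (tstar + 2 ^ (k+1))
        (le_add_of_nonneg_right h2k.le) hts
      have hdiff : tstar + (2:ℝ) ^ (k+1) - (tstar + 2 ^ k) = 2 ^ k := by
        rw [pow_succ]; ring
      rw [hdiff] at hCk
      set s := tstar + (2:ℝ) ^ (k+1) with hsdef
      have hX : (H s / C) ^ β ≤ M * (2:ℝ) ^ (-(α * k) - (k:ℝ)) := by
        rw [Real.rpow_sub (by norm_num : (0:ℝ) < 2), Real.rpow_natCast, ← mul_div_assoc,
          le_div_iff₀ h2k]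
        calc (H s / C) ^ β * 2 ^ k = 2 ^ k * (H s / C) ^ β := by ring
          _ ≤ H (tstar + 2 ^ k) := hCk
          _ ≤ M * 2 ^ (-(α * k)) := ih
      have hXnn : 0 ≤ H s / C := div_nonneg (hHnn s) hC.le
      have hX2 : H s / C ≤ (M * (2:ℝ) ^ (-(α * k) - (k:ℝ))) ^ β⁻¹ := by
        calc H s / C = ((H s / C) ^ β) ^ β⁻¹ := (Real.rpow_rpow_inv hXnn hβ0.ne').symm
          _ ≤ (M * (2:ℝ) ^ (-(α * k) - (k:ℝ))) ^ β⁻¹ :=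
            Real.rpow_le_rpow (Real.rpow_nonneg hXnn _) hX (by positivity)
      have hRHS : (M * (2:ℝ) ^ (-(α * k) - (k:ℝ))) ^ β⁻¹
          = M ^ β⁻¹ * (2:ℝ) ^ (-(α * k)) := by
        rw [Real.mul_rpow hM0.le (Real.rpow_nonneg (by norm_num) _),
          ← Real.rpow_mul (by norm_num : (0:ℝ) ≤ 2)]
        congr 1
        have hexp : (-(α * k) - (k:ℝ)) * β⁻¹ = -(α * k) := by
          field_simp
          nlinarith [hαβ]
        rw [hexp]
      rw [hRHS] at hX2
      have h2α : (0:ℝ) < (2:ℝ) ^ α := Real.rpow_pos_of_pos (by norm_num) _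
      have hMβ : (0:ℝ) < M ^ β⁻¹ := Real.rpow_pos_of_pos hM0 _
      have hkeyM : M ^ ((β - 1) / β) * M ^ β⁻¹ = M := by
        rw [← Real.rpow_add hM0,
          show (β - 1) / β + β⁻¹ = 1 from by field_simp; ring, Real.rpow_one]
      have hCM : C * M ^ β⁻¹ ≤ M * (2:ℝ) ^ (-α) := by
        have hstep : C * (2:ℝ) ^ α * M ^ β⁻¹ ≤ M := by
          calc C * (2:ℝ) ^ α * M ^ β⁻¹ ≤ M ^ ((β - 1) / β) * M ^ β⁻¹ :=
                mul_le_mul_of_nonneg_right hMC hMβ.le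
            _ = M := hkeyM
        rw [Real.rpow_neg (by norm_num : (0:ℝ) ≤ 2), ← div_eq_mul_inv, le_div_iff₀ h2α]
        nlinarith [hstep]
      calc H s = C * (H s / C) := by field_simp
        _ ≤ C * (M ^ β⁻¹ * (2:ℝ) ^ (-(α * k))) := mul_le_mul_of_nonneg_left hX2 hC.le
        _ = (C * M ^ β⁻¹) * (2:ℝ) ^ (-(α * k)) := by ring
        _ ≤ (M * (2:ℝ) ^ (-α)) * (2:ℝ) ^ (-(α * k)) :=
            mul_le_mul_of_nonneg_right hCM (Real.rpow_nonneg (by norm_num) _)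
        _ = M * (2:ℝ) ^ (-(α * ((k:ℝ) + 1))) := by
            rw [mul_assoc, ← Real.rpow_add (by norm_num : (0:ℝ) < 2)]
            congr 2
            ring
        _ = M * (2:ℝ) ^ (-(α * ((k + 1 : ℕ) : ℝ))) := by push_cast; ring_nf
  -- tail estimate via dyadic decomposition
  set δ : ℝ := (α - 1) / 2 with hδdef
  have hδ0 : 0 < δ := by rw [hδdef]; linarith
  set r : ℝ := (2:ℝ) ^ (-δ) with hrdef
  have hr0 : 0 < r := Real.rpow_pos_of_pos (by norm_num) _
  have hr1 : r < 1 := Real.rpow_lt_one_of_one_lt_of_neg (by norm_num) (by linarith)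
  set T : ℕ → ℝ := fun k => tstar + 2 ^ k with hTdef
  have hTmono : Monotone T := by
    intro a b hab
    simp only [hTdef]
    have h := pow_le_pow_right₀ (by norm_num : (1:ℝ) ≤ 2) hab
    linarith
  have hT0 : ∀ k, 0 < T k := fun k => by
    have h : (0:ℝ) < 2 ^ k := by positivity
    simp only [hTdef]; linarith
  have hZint : ∀ a b : ℝ, 0 ≤ a → IntegrableOn Z (Ioc a b) := by
    intro a b ha
    have hsub : Ioc a b ⊆ Ioi (0:ℝ) := fun x hx => lt_of_le_of_lt ha hx.1
    have hg : IntegrableOn (fun t => 1 + Z t ^ 2) (Ioc a b) := by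
      apply Integrable.add
      · exact (integrableOn_const_iff enorm_ne_top).mpr
          (Or.inr (by rw [Real.volume_Ioc]; exact ENNReal.ofReal_lt_top))
      · exact hL2.mono_set hsub
    refine Integrable.mono' hg hmeas.aestronglyMeasurable.restrict (ae_of_all _ fun t => ?_)
    rw [Real.norm_eq_abs]
    nlinarith [sq_abs (Z t), abs_nonneg (Z t), sq_nonneg (|Z t| - 1)]
  have hseg : ∀ k : ℕ, ∫ t in Ioc (T k) (T (k+1)), |Z t| ≤ (1 + M / 4) * r ^ k := by
    intro k
    set ε : ℝ := (2:ℝ) ^ (-((1 + δ) * k)) with hεdef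
    have hε0 : 0 < ε := Real.rpow_pos_of_pos (by norm_num) _
    have habs : ∀ t, |Z t| ≤ ε + Z t ^ 2 / (4 * ε) := by
      intro t
      rw [← sub_le_iff_le_add', le_div_iff₀ (by positivity : (0:ℝ) < 4 * ε)]
      nlinarith [sq_abs (Z t), sq_nonneg (|Z t| - 2 * ε), hε0]
    have hsub : Ioc (T k) (T (k+1)) ⊆ Ioi (0:ℝ) := fun x hx => lt_trans (hT0 k) hx.1
    have hconst : IntegrableOn (fun _ => ε) (Ioc (T k) (T (k+1))) :=
      (integrableOn_const_iff enorm_ne_top).mpr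
        (Or.inr (by rw [Real.volume_Ioc]; exact ENNReal.ofReal_lt_top))
    have hquad : IntegrableOn (fun t => Z t ^ 2 / (4 * ε)) (Ioc (T k) (T (k+1))) :=
      (hL2.mono_set hsub).div_const _
    have hZabs : IntegrableOn (fun t => |Z t|) (Ioc (T k) (T (k+1))) :=
      (hZint _ _ (hT0 k).le).abs
    have hvol : (volume (Ioc (T k) (T (k+1)))).toReal = 2 ^ k := by
      rw [Real.volume_Ioc, ENNReal.toReal_ofReal (by have h := hTmono (Nat.le_add_right k 1); linarith)]
      simp only [hTdef]; rw [pow_succ]; ring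
    have h1 : ∫ t in Ioc (T k) (T (k+1)), |Z t|
        ≤ ∫ t in Ioc (T k) (T (k+1)), (ε + Z t ^ 2 / (4 * ε)) :=
      integral_mono hZabs (hconst.add hquad) habs
    have h2 : ∫ t in Ioc (T k) (T (k+1)), (ε + Z t ^ 2 / (4 * ε))
        = (2:ℝ) ^ k * ε + (∫ t in Ioc (T k) (T (k+1)), Z t ^ 2) / (4 * ε) := by
      rw [integral_add hconst hquad, setIntegral_const, integral_div, measureReal_def, hvol, smul_eq_mul]
    have h3 : (∫ t in Ioc (T k) (T (k+1)), Z t ^ 2) ≤ M * (2:ℝ) ^ (-(α * k)) := by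
      refine le_trans ?_ (hind k)
      refine setIntegral_mono_set (hZ2int (tstar + 2 ^ k) ?_)
        (ae_of_all _ fun τ => sq_nonneg _) ?_
      · have h : (0:ℝ) < 2 ^ k := by positivity
        linarith
      · simp only [hTdef]
        exact HasSubset.Subset.eventuallyLE Ioc_subset_Ioi_self
    have e1 : (2:ℝ) ^ k * ε = (2:ℝ) ^ (-(δ * k)) := by
      rw [hεdef, ← Real.rpow_natCast 2 k, ← Real.rpow_add (by norm_num : (0:ℝ) < 2)]
      congr 1; ring
    have e2 : M * (2:ℝ) ^ (-(α * k)) / (4 * ε) = (M / 4) * (2:ℝ) ^ (-(δ * k)) := by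
      have : M * (2:ℝ) ^ (-(α * k)) / (4 * ε)
          = (M / 4) * ((2:ℝ) ^ (-(α * k)) / ε) := by ring
      rw [this, hεdef, ← Real.rpow_sub (by norm_num : (0:ℝ) < 2)]
      congr 2
      rw [hδdef]; ring
    have e3 : r ^ k = (2:ℝ) ^ (-(δ * k)) := by
      rw [hrdef, ← Real.rpow_natCast ((2:ℝ) ^ (-δ)) k,
        ← Real.rpow_mul (by norm_num : (0:ℝ) ≤ 2)]
      congr 1; ring
    have h4 : (∫ t in Ioc (T k) (T (k+1)), Z t ^ 2) / (4 * ε)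
        ≤ M * (2:ℝ) ^ (-(α * k)) / (4 * ε) := by
      apply div_le_div_of_nonneg_right h3 (by positivity)
    calc ∫ t in Ioc (T k) (T (k+1)), |Z t|
        ≤ (2:ℝ) ^ k * ε + (∫ t in Ioc (T k) (T (k+1)), Z t ^ 2) / (4 * ε) := by
          rw [← h2]; exact h1
      _ ≤ (2:ℝ) ^ k * ε + M * (2:ℝ) ^ (-(α * k)) / (4 * ε) := by linarith
      _ = (1 + M / 4) * r ^ k := by rw [e1, e2, e3]; ring
  have hsum : ∀ n : ℕ, ∫ t in Ioc (T 0) (T n), |Z t|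
      ≤ (1 + M / 4) * ∑ i ∈ Finset.range n, r ^ i := by
    intro n
    induction n with
    | zero => simp
    | succ n ih =>
      have hunion : Ioc (T 0) (T (n+1)) = Ioc (T 0) (T n) ∪ Ioc (T n) (T (n+1)) :=
        (Ioc_union_Ioc_eq_Ioc (hTmono (Nat.zero_le n)) (hTmono (Nat.le_succ n))).symm
      have hdisj : Disjoint (Ioc (T 0) (T n)) (Ioc (T n) (T (n+1))) := by
        apply Set.disjoint_left.mpr
        intro x h1 h2
        exact absurd h1.2 (not_le.mpr h2.1)
      rw [hunion, setIntegral_union hdisj measurableSet_Ioc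
        ((hZint _ _ (hT0 0).le).abs) ((hZint _ _ (hT0 n).le).abs),
        Finset.sum_range_succ, mul_add]
      exact add_le_add ih (hseg n)
  set B : ℝ := (1 + M / 4) * (1 - r)⁻¹ with hBdef
  have hsumB : ∀ n, ∫ t in Ioc (T 0) (T n), |Z t| ≤ B := by
    intro n
    refine le_trans (hsum n) ?_
    refine mul_le_mul_of_nonneg_left ?_ (by positivity)
    calc ∑ i ∈ Finset.range n, r ^ i ≤ ∑' i : ℕ, r ^ i :=
        Summable.sum_le_tsum _ (fun i _ => pow_nonneg hr0.le i)
          (summable_geometric_of_lt_one hr0.le hr1)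
      _ = (1 - r)⁻¹ := tsum_geometric_of_lt_one hr0.le hr1
  have htail : IntegrableOn Z (Ioi (T 0)) := by
    refine integrableOn_Ioi_of_intervalIntegral_norm_bounded (l := (Filter.atTop : Filter ℕ))
      (b := T) B (T 0) (fun n : ℕ => hZint (T 0) (T n) (hT0 0).le) ?_ ?_
    · apply Filter.tendsto_atTop_add_const_left
      exact tendsto_pow_atTop_atTop_of_one_lt (by norm_num : (1:ℝ) < 2)
    · filter_upwards with n
      rw [intervalIntegral.integral_of_le (hTmono (Nat.zero_le n))]
      calc (∫ t in Ioc (T 0) (T n), ‖Z t‖) = ∫ t in Ioc (T 0) (T n), |Z t| := by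
            simp [Real.norm_eq_abs]
        _ ≤ B := hsumB n
  have hhead : IntegrableOn Z (Ioc 0 (T 0)) := hZint 0 (T 0) le_rfl
  have hfin := hhead.union htail
  rwa [Ioc_union_Ioi_eq_Ioi (hT0 0).le] at hfin
end

section
/- Let G : [t*, ∞) → [0, ∞) be absolutely continuous, let χ ∈ (0, 1/2), α > 1, C, C' > 0, and suppose G'(t) + C·G(t)^{2(1-χ)} ≤ C'·(1+t)^{2(1-χ)(1-2α)} for almost all t ≥ t*. Then there exists K > 0 such that G(t) ≤ K·(1+t)^{-λ₁} for all t ≥ t*, where λ₁ = min{1/(1-2χ), 2α-1}. -/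
open MeasureTheory Set

theorem stmt_13 (tstar χ α C C' : ℝ) (hχ : χ ∈ Set.Ioo (0:ℝ) (1/2)) (hα : 1 < α)
    (hC : 0 < C) (hC' : 0 < C') (htstar : 0 ≤ tstar)
    (G g : ℝ → ℝ) (hGnn : ∀ t : ℝ, tstar ≤ t → 0 ≤ G t)
    (hloc : ∀ t : ℝ, tstar ≤ t → MeasureTheory.IntegrableOn g (Set.Icc tstar t))
    (hrep : ∀ t : ℝ, tstar ≤ t → G t = G tstar + ∫ τ in tstar..t, g τ)
    (hineq : ∀ᵐ t : ℝ, tstar ≤ t →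
      g t + C * G t ^ (2 * (1 - χ)) ≤ C' * (1 + t) ^ (2 * (1 - χ) * (1 - 2 * α))) :
    ∃ K > 0, ∀ t : ℝ, tstar ≤ t →
      G t ≤ K * (1 + t) ^ (-(min (1 / (1 - 2 * χ)) (2 * α - 1))) := by
  obtain ⟨hχ0, hχ2⟩ := hχ
  set lam := min (1 / (1 - 2 * χ)) (2 * α - 1) with hlam_def
  set p := 2 * (1 - χ) with hp_def
  have h2χ : 0 < 1 - 2 * χ := by linarith
  have hp1 : 1 < p := by rw [hp_def]; linarith
  have hp0 : 0 < p := by linarith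
  have hlam_pos : 0 < lam := lt_min (by positivity) (by linarith)
  have hlam1 : lam * (p - 1) ≤ 1 := by
    have h1 : lam ≤ 1 / (1 - 2 * χ) := min_le_left _ _
    have : p - 1 = 1 - 2 * χ := by rw [hp_def]; ring
    rw [this]
    calc lam * (1 - 2 * χ) ≤ (1 / (1 - 2 * χ)) * (1 - 2 * χ) :=
          mul_le_mul_of_nonneg_right h1 h2χ.le
      _ = 1 := by field_simp
  have hlam2 : lam ≤ 2 * α - 1 := min_le_right _ _
  -- choose K
  set K := max (max 1 (G tstar * (1 + tstar) ^ lam)) (((lam + C') / C) ^ (1 / (p - 1)))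
    with hK_def
  have hK1 : (1:ℝ) ≤ K := le_max_of_le_left (le_max_left _ _)
  have hKpos : 0 < K := lt_of_lt_of_le one_pos hK1
  refine ⟨K, hKpos, ?_⟩
  -- key algebraic bound on K
  have hKbig : lam * K + C' ≤ C * K ^ p := by
    have hM : ((lam + C') / C) ^ (1 / (p - 1)) ≤ K := le_max_right _ _
    have hMnn : (0:ℝ) ≤ (lam + C') / C := by positivity
    have hKp1 : (lam + C') / C ≤ K ^ (p - 1) := by
      have := Real.rpow_le_rpow (Real.rpow_nonneg hMnn _) hM (by linarith : (0:ℝ) ≤ p - 1)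
      rwa [← Real.rpow_mul hMnn, one_div, inv_mul_cancel₀ (by linarith : p - 1 ≠ 0),
        Real.rpow_one] at this
    have hKp : K ^ p = K ^ (p - 1) * K := by
      have h := Real.rpow_add hKpos (p - 1) 1
      rw [Real.rpow_one] at h
      calc K ^ p = K ^ (p - 1 + 1) := by norm_num
        _ = K ^ (p - 1) * K := h
    calc lam * K + C' ≤ lam * K + C' * K := by nlinarith
      _ = ((lam + C') / C) * K * C := by field_simp
      _ ≤ K ^ (p - 1) * K * C := by
          have : ((lam + C') / C) * K ≤ K ^ (p - 1) * K :=
            mul_le_mul_of_nonneg_right hKp1 hKpos.le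
          nlinarith
      _ = C * K ^ p := by rw [hKp]; ring
  -- initial bound
  have hKinit : G tstar ≤ K * (1 + tstar) ^ (-lam) := by
    have hx : (0:ℝ) < 1 + tstar := by linarith
    have h1 : G tstar * (1 + tstar) ^ lam ≤ K := le_max_of_le_left (le_max_right _ _)
    have := mul_le_mul_of_nonneg_right h1 (Real.rpow_nonneg hx.le (-lam))
    calc G tstar = G tstar * ((1 + tstar) ^ lam * (1 + tstar) ^ (-lam)) := by
          rw [← Real.rpow_add hx]; simp
      _ = G tstar * (1 + tstar) ^ lam * (1 + tstar) ^ (-lam) := by ring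
      _ ≤ K * (1 + tstar) ^ (-lam) := this
  -- supersolution inequality
  have hsuper : ∀ τ : ℝ, 0 ≤ τ →
      lam * K * (1 + τ) ^ (-lam - 1) + C' * (1 + τ) ^ (p * (1 - 2 * α))
        ≤ C * (K * (1 + τ) ^ (-lam)) ^ p := by
    intro τ hτ
    have hx : (1:ℝ) ≤ 1 + τ := by linarith
    have hx0 : (0:ℝ) < 1 + τ := by linarith
    have e1 : (1 + τ) ^ (-lam - 1) ≤ (1 + τ) ^ (-lam * p) := by
      apply Real.rpow_le_rpow_of_exponent_le hx
      nlinarith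
    have e2 : (1 + τ) ^ (p * (1 - 2 * α)) ≤ (1 + τ) ^ (-lam * p) := by
      apply Real.rpow_le_rpow_of_exponent_le hx
      nlinarith
    have hexp : (K * (1 + τ) ^ (-lam)) ^ p = K ^ p * (1 + τ) ^ (-lam * p) := by
      rw [Real.mul_rpow hKpos.le (Real.rpow_nonneg hx0.le _), ← Real.rpow_mul hx0.le]
    rw [hexp]
    have hxnn : (0:ℝ) ≤ (1 + τ) ^ (-lam * p) := Real.rpow_nonneg hx0.le _
    calc lam * K * (1 + τ) ^ (-lam - 1) + C' * (1 + τ) ^ (p * (1 - 2 * α))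
        ≤ lam * K * (1 + τ) ^ (-lam * p) + C' * (1 + τ) ^ (-lam * p) := by
          have := mul_le_mul_of_nonneg_left e1 (by positivity : (0:ℝ) ≤ lam * K)
          have := mul_le_mul_of_nonneg_left e2 hC'.le
          linarith
      _ = (lam * K + C') * (1 + τ) ^ (-lam * p) := by ring
      _ ≤ C * K ^ p * (1 + τ) ^ (-lam * p) := mul_le_mul_of_nonneg_right hKbig hxnn
      _ = C * (K ^ p * (1 + τ) ^ (-lam * p)) := by ring
  -- the comparison function and its derivative
  set ψ : ℝ → ℝ := fun t => K * (1 + t) ^ (-lam) with hψ_def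
  set ψ' : ℝ → ℝ := fun t => K * (-lam * (1 + t) ^ (-lam - 1)) with hψ'_def
  have hψderiv : ∀ τ : ℝ, 0 ≤ τ → HasDerivAt ψ (ψ' τ) τ := by
    intro τ hτ
    have hx0 : (0:ℝ) < 1 + τ := by linarith
    have h1 : HasDerivAt (fun t : ℝ => 1 + t) 1 τ := (hasDerivAt_id τ).const_add 1
    have h2 : HasDerivAt (fun x : ℝ => x ^ (-lam)) (-lam * (1 + τ) ^ (-lam - 1)) (1 + τ) :=
      Real.hasDerivAt_rpow_const (Or.inl hx0.ne')
    have h3 := (h2.comp τ h1)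
    simpa [hψ_def, hψ'_def, Function.comp] using h3.const_mul K
  have hψnn : ∀ τ : ℝ, 0 ≤ τ → 0 ≤ ψ τ := by
    intro τ hτ
    have hx0 : (0:ℝ) < 1 + τ := by linarith
    exact mul_nonneg hKpos.le (Real.rpow_nonneg hx0.le _)
  -- main comparison
  intro s hs
  by_contra hcon
  push_neg at hcon
  change ψ s < G s at hcon
  -- the set A
  set A := {t : ℝ | t ∈ Icc tstar s ∧ G t ≤ ψ t} with hA_def
  have hGcont : ContinuousOn G (Icc tstar s) := by
    have hint : IntegrableOn g (Icc tstar s) := hloc s hs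
    have h1 : ContinuousOn (fun x => ∫ t in Ioc tstar x, g t) (Icc tstar s) :=
      intervalIntegral.continuousOn_primitive hint
    have h2 : ContinuousOn (fun x => G tstar + ∫ t in Ioc tstar x, g t) (Icc tstar s) :=
      continuousOn_const.add h1
    apply h2.congr
    intro t ht
    rw [hrep t ht.1, intervalIntegral.integral_of_le ht.1]
  have hψcont : ContinuousOn ψ (Icc tstar s) := by
    apply ContinuousOn.mul continuousOn_const
    apply ContinuousOn.rpow_const
    · exact (continuousOn_const.add continuousOn_id)
    · intro t ht
      left
      have : (0:ℝ) < 1 + t := by linarith [ht.1]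
      exact this.ne'
  have hAclosed : IsClosed A := by
    have : A = Icc tstar s ∩ (fun t => G t - ψ t) ⁻¹' Iic 0 := by
      ext t
      simp only [hA_def, mem_setOf_eq, mem_inter_iff, mem_preimage, mem_Iic,
        sub_nonpos]
    rw [this]
    exact (hGcont.sub hψcont).preimage_isClosed_of_isClosed isClosed_Icc isClosed_Iic
  have hAne : A.Nonempty := ⟨tstar, ⟨le_refl _, hs⟩, hKinit⟩
  have hAbdd : BddAbove A := ⟨s, fun t ht => ht.1.2⟩
  set u := sSup A with hu_def
  have huA : u ∈ A := hAclosed.csSup_mem hAne hAbdd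
  have hut : tstar ≤ u := huA.1.1
  have hus : u ≤ s := huA.1.2
  have hune : u ≠ s := fun h => absurd (h ▸ huA.2) (not_le.mpr hcon)
  have hus' : u < s := lt_of_le_of_ne hus hune
  -- on (u, s], G > ψ
  have hGgt : ∀ t : ℝ, t ∈ Ioc u s → ψ t < G t := by
    intro t ht
    by_contra h
    push_neg at h
    have : t ∈ A := ⟨⟨le_trans hut ht.1.le, ht.2⟩, h⟩
    exact absurd (le_csSup hAbdd this) (not_le.mpr ht.1)
  -- integrability
  have hgint : IntervalIntegrable g volume u s := by
    rw [intervalIntegrable_iff_integrableOn_Ioc_of_le hus]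
    exact (hloc s hs).mono_set (Ioc_subset_Icc_self.trans (Icc_subset_Icc hut le_rfl))
  have hgint' : IntervalIntegrable g volume tstar u := by
    rw [intervalIntegrable_iff_integrableOn_Ioc_of_le hut]
    exact (hloc u hut).mono_set Ioc_subset_Icc_self
  have hgint'' : IntervalIntegrable g volume tstar s := by
    rw [intervalIntegrable_iff_integrableOn_Ioc_of_le hs]
    exact (hloc s hs).mono_set Ioc_subset_Icc_self
  have hψ'cont : ContinuousOn ψ' (Icc u s) := by
    apply ContinuousOn.mul continuousOn_const
    apply ContinuousOn.mul continuousOn_const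
    apply ContinuousOn.rpow_const
    · exact (continuousOn_const.add continuousOn_id)
    · intro t ht
      left
      have : (0:ℝ) < 1 + t := by linarith [le_trans htstar (le_trans hut ht.1)]
      exact this.ne'
  have hψ'int : IntervalIntegrable ψ' volume u s := by
    apply ContinuousOn.intervalIntegrable
    rwa [uIcc_of_le hus]
  -- FTC for ψ
  have hψFTC : ∫ τ in u..s, ψ' τ = ψ s - ψ u := by
    apply intervalIntegral.integral_eq_sub_of_hasDerivAt
    · intro x hx
      rw [uIcc_of_le hus] at hx
      exact hψderiv x (le_trans htstar (le_trans hut hx.1))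
    · exact hψ'int
  -- representation of G s - G u
  have hGrep : ∫ τ in u..s, g τ = G s - G u := by
    have := intervalIntegral.integral_interval_sub_left hgint'' hgint'
    rw [hrep s hs, hrep u hut]
    linarith [this]
  -- the integral of g - ψ' over (u,s] is nonpositive
  have hkey : ∫ τ in u..s, (g τ - ψ' τ) ≤ 0 := by
    rw [intervalIntegral.integral_of_le hus'.le]
    apply MeasureTheory.integral_nonpos_of_ae
    have h1 : ∀ᵐ t : ℝ ∂(volume.restrict (Ioc u s)), tstar ≤ t →
        g t + C * G t ^ p ≤ C' * (1 + t) ^ (p * (1 - 2 * α)) := by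
      apply ae_restrict_of_ae
      filter_upwards [hineq] with t ht
      intro h
      exact ht h
    have h2 : ∀ᵐ t : ℝ ∂(volume.restrict (Ioc u s)), t ∈ Ioc u s :=
      ae_restrict_mem measurableSet_Ioc
    filter_upwards [h1, h2] with t ht htmem
    have htt : tstar ≤ t := le_trans hut htmem.1.le
    have ht0 : (0:ℝ) ≤ t := le_trans htstar htt
    have hGψ : ψ t < G t := hGgt t htmem
    have hψt : 0 ≤ ψ t := hψnn t ht0
    have hpow : ψ t ^ p ≤ G t ^ p := Real.rpow_le_rpow hψt hGψ.le hp0.le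
    have hsup := hsuper t ht0
    have hineqt := ht htt
    have hψ't : ψ' t = K * (-lam * (1 + t) ^ (-lam - 1)) := rfl
    have hψtdef : ψ t = K * (1 + t) ^ (-lam) := rfl
    show g t - ψ' t ≤ 0
    rw [hψ't]
    rw [hψtdef] at hpow
    have hCpow := mul_le_mul_of_nonneg_left hpow hC.le
    linarith
  -- conclude
  have hsub : ∫ τ in u..s, (g τ - ψ' τ) = (G s - G u) - (ψ s - ψ u) := by
    rw [intervalIntegral.integral_sub hgint hψ'int, hGrep, hψFTC]
  rw [hsub] at hkey
  have : G s ≤ ψ s := by linarith [huA.2]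
  exact absurd hcon (not_lt.mpr this)
end
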